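/- Let T > 0, S₀ > 0, μ₁ ≤ μ and 0 < σ ≤ s. Let F₁ be the CDF of the log-normal distribution with parameters log S₀ + (μ₁ − s²/2)T and s²T (log-mean and log-variance), and F₂ the CDF of the log-normal distribution with parameters log S₀ + (μ − σ²/2)T and σ²T. Then F₁ ⪯_{𝔽_SSD} F₂, i.e., ∫ f dF₁ ≤ ∫ f dF₂ for every nondecreasing concave function f: ℝ₊ → ℝ for which both integrals exist and are finite. -/

import Mathlib

open MeasureTheory Set Real ProbabilityTheory
open scoped NNReal ENNReal

noncomputable section

/-- Integral stochastic ordering w.r.t. a class `𝔽`, between distributions on `ℝ`. -/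
def IntOrder (𝔽 : Set (ℝ → ℝ)) (μ ν : Measure ℝ) : Prop :=
  ∀ f ∈ 𝔽, Integrable f μ → Integrable f ν → ∫ x, f x ∂μ ≤ ∫ x, f x ∂ν

/-- `𝔽_SSD`: all nondecreasing concave functions on `ℝ₊`. -/
def FSSD : Set (ℝ → ℝ) := {f | MonotoneOn f (Ici 0) ∧ ConcaveOn ℝ (Ici 0) f}

/-- The log-normal distribution with parameters `m` (log-mean) and `v` (log-variance):
the law of `exp Z` with `Z` normal of mean `m` and variance `v`. -/
def lognormal (m v : ℝ) : Measure ℝ :=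
  (gaussianReal m v.toNNReal).map Real.exp

/-- Existence of a nonnegative supergradient at an interior point. -/
lemma exists_supergradient {f : ℝ → ℝ} (hm : MonotoneOn f (Ici 0))
    (hc : ConcaveOn ℝ (Ici 0) f) {c : ℝ} (hc0 : 0 < c) :
    ∃ k, 0 ≤ k ∧ ∀ t ∈ Ici (0:ℝ), f t ≤ f c + k * (t - c) := by
  set S : Set ℝ := (fun x => (f x - f c) / (x - c)) '' Ioi c with hS
  have hne : S.Nonempty := ⟨_, ⟨c + 1, by simp only [mem_Ioi]; linarith, rfl⟩⟩
  have h3 : ∀ t, 0 ≤ t → t < c → ∀ x, c < x →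
      (f x - f c) / (x - c) ≤ (f c - f t) / (c - t) := by
    intro t ht htc x hx
    exact hc.slope_anti_adjacent (mem_Ici.2 ht)
      (mem_Ici.2 (ht.trans (htc.trans hx).le)) htc hx
  have hbdd : BddAbove S := by
    refine ⟨(f c - f (c/2)) / (c - c/2), ?_⟩
    rintro _ ⟨x, hx, rfl⟩
    exact h3 (c/2) (by linarith) (by linarith) x hx
  set k := sSup S with hk
  have hub : ∀ x, c < x → (f x - f c) / (x - c) ≤ k :=
    fun x hx => le_csSup hbdd ⟨x, hx, rfl⟩
  have hlb : ∀ t, 0 ≤ t → t < c → k ≤ (f c - f t) / (c - t) := by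
    intro t ht htc
    refine csSup_le hne ?_
    rintro _ ⟨x, hx, rfl⟩
    exact h3 t ht htc x hx
  have hk0 : 0 ≤ k := by
    refine le_trans ?_ (hub (c+1) (by linarith))
    have h1 : f c ≤ f (c+1) := hm (mem_Ici.2 hc0.le) (mem_Ici.2 (by linarith)) (by linarith)
    have h2 : c + 1 - c = 1 := by ring
    rw [h2, div_one]
    linarith
  refine ⟨k, hk0, fun t ht => ?_⟩
  rcases lt_trichotomy t c with h | h | h
  · have h1 := hlb t (mem_Ici.1 ht) h
    rw [le_div_iff₀ (by linarith : (0:ℝ) < c - t)] at h1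
    linarith
  · subst h; simp
  · have h1 := hub t h
    rw [div_le_iff₀ (by linarith : (0:ℝ) < t - c)] at h1
    linarith

lemma concave_step_left {f : ℝ → ℝ} (hc : ConcaveOn ℝ (Ici 0) f) {c k x y : ℝ}
    (hc0 : 0 < c) (hgrad : ∀ t ∈ Ici (0:ℝ), f t ≤ f c + k * (t - c))
    (hx : 0 ≤ x) (hxy : x ≤ y) (hyc : y ≤ c) :
    f x - f y ≤ k * (x - y) := by
  rcases eq_or_lt_of_le (hxy.trans hyc) with hxc | hxc
  · have hyc' : y = c := le_antisymm hyc (hxc ▸ hxy)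
    rw [hxc, hyc']
    simp
  · set b := (y - x) / (c - x) with hb
    have hcx : (0:ℝ) < c - x := by linarith
    have hb0 : 0 ≤ b := div_nonneg (by linarith) hcx.le
    have hb1 : b ≤ 1 := by rw [hb, div_le_one hcx]; linarith
    have hab : (1 - b) + b = 1 := by ring
    have hcomb : (1 - b) * x + b * c = y := by
      have h' : b * (c - x) = y - x := by rw [hb, div_mul_cancel₀ _ hcx.ne']
      linear_combination h'
    have hfy : (1 - b) * f x + b * f c ≤ f y := by
      have h := hc.2 (mem_Ici.2 hx) (mem_Ici.2 hc0.le) (by linarith : (0:ℝ) ≤ 1 - b) hb0 hab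
      simpa only [smul_eq_mul, hcomb] using h
    have hgx : f x ≤ f c + k * (x - c) := hgrad x (mem_Ici.2 hx)
    have hbcx : b * (c - x) = y - x := by rw [hb, div_mul_cancel₀ _ hcx.ne']
    have h5 : b * (f x - f c) ≤ b * (k * (x - c)) :=
      mul_le_mul_of_nonneg_left (by linarith) hb0
    have h6 : b * (k * (x - c)) = k * (x - y) := by linear_combination (-k) * hbcx
    linarith

lemma concave_step_right {f : ℝ → ℝ} (hc : ConcaveOn ℝ (Ici 0) f) {c k x y : ℝ}
    (hc0 : 0 < c) (hgrad : ∀ t ∈ Ici (0:ℝ), f t ≤ f c + k * (t - c))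
    (hcy : c ≤ y) (hyx : y ≤ x) :
    f x - f y ≤ k * (x - y) := by
  rcases eq_or_lt_of_le (hcy.trans hyx) with hcx | hcx
  · have hyc' : y = c := le_antisymm (hcx ▸ hyx) hcy
    rw [hyc', ← hcx]
    simp
  · set a := (x - y) / (x - c) with ha
    have hxc : (0:ℝ) < x - c := by linarith
    have ha0 : 0 ≤ a := div_nonneg (by linarith) hxc.le
    have ha1 : a ≤ 1 := by rw [ha, div_le_one hxc]; linarith
    have hab : a + (1 - a) = 1 := by ring
    have hcomb : a * c + (1 - a) * x = y := by
      have h' : a * (x - c) = x - y := by rw [ha, div_mul_cancel₀ _ hxc.ne']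
      linear_combination -h'
    have hfy : a * f c + (1 - a) * f x ≤ f y := by
      have h := hc.2 (mem_Ici.2 hc0.le) (mem_Ici.2 (hc0.le.trans (hcy.trans hyx)))
        ha0 (by linarith : (0:ℝ) ≤ 1 - a) hab
      simpa only [smul_eq_mul, hcomb] using h
    have hgx : f x ≤ f c + k * (x - c) := hgrad x (mem_Ici.2 (hc0.le.trans (hcy.trans hyx)))
    have hacx : a * (x - c) = x - y := by rw [ha, div_mul_cancel₀ _ hxc.ne']
    have h5 : a * (f x - f c) ≤ a * (k * (x - c)) :=
      mul_le_mul_of_nonneg_left (by linarith) ha0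
    have h6 : a * (k * (x - c)) = k * (x - y) := by linear_combination k * hacx
    linarith

lemma exp_mul_gaussianPDFReal (M : ℝ) {v : ℝ≥0} (hv : v ≠ 0) (x : ℝ) :
    Real.exp x * gaussianPDFReal M v x
      = Real.exp (M + v / 2) * gaussianPDFReal (M + v) v x := by
  have hv' : (0:ℝ) < (v:ℝ) := lt_of_le_of_ne v.coe_nonneg (by exact_mod_cast (Ne.symm hv))
  have hvne : (v:ℝ) ≠ 0 := hv'.ne'
  have hexp : x + -(x - M)^2 / (2 * v) = (M + v/2) + -(x - (M + v))^2 / (2 * v) := by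
    field_simp
    ring
  unfold gaussianPDFReal
  calc Real.exp x * ((√(2 * π * v))⁻¹ * Real.exp (-(x - M)^2 / (2 * v)))
      = (√(2 * π * v))⁻¹ * (Real.exp x * Real.exp (-(x - M)^2 / (2 * v))) := by ring
    _ = (√(2 * π * v))⁻¹ * Real.exp (x + -(x - M)^2 / (2 * v)) := by rw [Real.exp_add]
    _ = (√(2 * π * v))⁻¹ * Real.exp ((M + v/2) + -(x - (M + v))^2 / (2 * v)) := by rw [hexp]
    _ = (√(2 * π * v))⁻¹ * (Real.exp (M + v/2) * Real.exp (-(x - (M + v))^2 / (2 * v))) := by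
        rw [Real.exp_add]
    _ = Real.exp (M + v / 2) * ((√(2 * π * v))⁻¹ * Real.exp (-(x - (M + v))^2 / (2 * v))) := by
        ring

lemma integral_exp_gaussianReal (M : ℝ) (v : ℝ≥0) :
    ∫ x, Real.exp x ∂(gaussianReal M v) = Real.exp (M + v / 2) := by
  by_cases hv : v = 0
  · subst hv
    simp [integral_dirac]
  · rw [gaussianReal_of_var_ne_zero _ hv,
      show gaussianPDF M v = (fun x => ((Real.toNNReal (gaussianPDFReal M v x) : ℝ≥0) : ℝ≥0∞))
        from rfl,
      integral_withDensity_eq_integral_smul ((measurable_gaussianPDFReal M v).real_toNNReal)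
        Real.exp]
    have heq : (fun x => (Real.toNNReal (gaussianPDFReal M v x)) • Real.exp x)
        = fun x => Real.exp (M + v / 2) * gaussianPDFReal (M + v) v x := by
      funext x
      rw [NNReal.smul_def, smul_eq_mul, Real.coe_toNNReal _ (gaussianPDFReal_nonneg M v x),
        mul_comm, exp_mul_gaussianPDFReal M hv]
    rw [heq, integral_const_mul, integral_gaussianPDFReal_eq_one _ hv, mul_one]

lemma integrable_exp_gaussianReal (M : ℝ) (v : ℝ≥0) :
    Integrable Real.exp (gaussianReal M v) := by
  by_cases hv : v = 0
  · subst hv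
    simp only [gaussianReal_zero_var]
    exact (integrable_const (Real.exp M)).congr (ae_eq_dirac Real.exp).symm
  · rw [gaussianReal_of_var_ne_zero _ hv,
      integrable_withDensity_iff (measurable_gaussianPDF M v)
        (ae_of_all _ fun x => ENNReal.ofReal_lt_top)]
    have heq : (fun x => Real.exp x * (gaussianPDF M v x).toReal)
        = fun x => Real.exp (M + v / 2) * gaussianPDFReal (M + v) v x := by
      funext x
      rw [gaussianPDF, ENNReal.toReal_ofReal (gaussianPDFReal_nonneg M v x),
        exp_mul_gaussianPDFReal M hv]
    rw [heq]
    exact (integrable_gaussianPDFReal _ _).const_mul _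

lemma gaussianReal_map_affine (M a : ℝ) :
    (gaussianReal 0 1).map (fun z => M + a * z)
      = gaussianReal M ⟨a ^ 2, sq_nonneg a⟩ := by
  have h : (fun z : ℝ => M + a * z) = (fun x => M + x) ∘ (fun z => a * z) := rfl
  rw [h, ← Measure.map_map (by fun_prop) (by fun_prop)]
  rw [show (fun z : ℝ => a * z) = (a * ·) from rfl, gaussianReal_map_const_mul,
    show (fun x : ℝ => M + x) = (M + ·) from rfl, gaussianReal_map_const_add]
  norm_num
  rfl

lemma lognormal_eq_map (M a : ℝ) :
    lognormal M (a ^ 2)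
      = (gaussianReal 0 1).map (fun z => Real.exp (M + a * z)) := by
  unfold lognormal
  have h1 : (a ^ 2).toNNReal = ⟨a ^ 2, sq_nonneg a⟩ := by
    apply NNReal.coe_injective
    simp [Real.coe_toNNReal _ (sq_nonneg a)]
    rfl
  rw [h1, ← gaussianReal_map_affine, Measure.map_map measurable_exp (by fun_prop)]
  rfl

lemma main_aux (M₁ M₂ a₁ a₂ : ℝ) (ha₂ : 0 < a₂) (ha : a₂ ≤ a₁)
    (hE : M₁ + a₁ ^ 2 / 2 ≤ M₂ + a₂ ^ 2 / 2) :
    IntOrder FSSD (lognormal M₁ (a₁ ^ 2)) (lognormal M₂ (a₂ ^ 2)) := by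
  intro f hf hi₁ hi₂
  obtain ⟨hmono, hconc⟩ := hf
  have hmG₁ : Measurable (fun z : ℝ => Real.exp (M₁ + a₁ * z)) := by fun_prop
  have hmG₂ : Measurable (fun z : ℝ => Real.exp (M₂ + a₂ * z)) := by fun_prop
  rw [lognormal_eq_map M₁ a₁] at hi₁
  rw [lognormal_eq_map M₂ a₂] at hi₂
  rw [lognormal_eq_map M₁ a₁, lognormal_eq_map M₂ a₂,
    integral_map hmG₁.aemeasurable hi₁.1, integral_map hmG₂.aemeasurable hi₂.1]
  have iF₁ : Integrable (fun z => f (Real.exp (M₁ + a₁ * z))) (gaussianReal 0 1) :=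
    (integrable_map_measure hi₁.1 hmG₁.aemeasurable).mp hi₁
  have iF₂ : Integrable (fun z => f (Real.exp (M₂ + a₂ * z))) (gaussianReal 0 1) :=
    (integrable_map_measure hi₂.1 hmG₂.aemeasurable).mp hi₂
  have iG : ∀ M a : ℝ, Integrable (fun z => Real.exp (M + a * z)) (gaussianReal 0 1) := by
    intro M a
    have h := (integrable_map_measure (Real.continuous_exp.measurable.aestronglyMeasurable)
      (by fun_prop : AEMeasurable (fun z : ℝ => M + a * z) (gaussianReal 0 1))).mp
    rw [gaussianReal_map_affine] at h
    exact h (integrable_exp_gaussianReal M _)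
  have EG : ∀ M a : ℝ, ∫ z, Real.exp (M + a * z) ∂(gaussianReal 0 1)
      = Real.exp (M + a ^ 2 / 2) := by
    intro M a
    have h : ∫ z, Real.exp (M + a * z) ∂(gaussianReal 0 1)
        = ∫ x, Real.exp x ∂((gaussianReal 0 1).map (fun z => M + a * z)) :=
      (integral_map (by fun_prop) Real.continuous_exp.measurable.aestronglyMeasurable).symm
    rw [h, gaussianReal_map_affine]
    exact integral_exp_gaussianReal M _
  rcases eq_or_lt_of_le ha with heq | hlt
  · -- equal slopes
    have hM : M₁ ≤ M₂ := by nlinarith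
    refine integral_mono iF₁ iF₂ fun z => ?_
    have h1 : Real.exp (M₁ + a₁ * z) ≤ Real.exp (M₂ + a₂ * z) :=
      exp_le_exp.2 (by rw [heq]; linarith)
    exact hmono (mem_Ici.2 (exp_nonneg _)) (mem_Ici.2 (exp_nonneg _)) h1
  · -- a₂ < a₁ : crossing argument
    set zs := (M₂ - M₁) / (a₁ - a₂) with hzs
    have hane : a₁ - a₂ ≠ 0 := by linarith
    have hzs' : (a₁ - a₂) * zs = M₂ - M₁ := by rw [hzs, mul_comm, div_mul_cancel₀ _ hane]
    have hc2 : Real.exp (M₁ + a₁ * zs) = Real.exp (M₂ + a₂ * zs) := by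
      congr 1
      linarith
    obtain ⟨k, hk0, hkgrad⟩ := exists_supergradient hmono hconc (exp_pos (M₁ + a₁ * zs))
    have key : ∀ z, f (Real.exp (M₁ + a₁ * z)) - k * Real.exp (M₁ + a₁ * z)
        ≤ f (Real.exp (M₂ + a₂ * z)) - k * Real.exp (M₂ + a₂ * z) := by
      intro z
      rcases le_total z zs with hz | hz
      · have h1 : Real.exp (M₁ + a₁ * z) ≤ Real.exp (M₂ + a₂ * z) :=
          exp_le_exp.2 (by nlinarith)
        have h2 : Real.exp (M₂ + a₂ * z) ≤ Real.exp (M₁ + a₁ * zs) := by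
          rw [hc2]
          exact exp_le_exp.2 (by nlinarith)
        have := concave_step_left hconc (exp_pos _) hkgrad (exp_nonneg _) h1 h2
        linarith
      · have h1 : Real.exp (M₂ + a₂ * z) ≤ Real.exp (M₁ + a₁ * z) :=
          exp_le_exp.2 (by nlinarith)
        have h2 : Real.exp (M₁ + a₁ * zs) ≤ Real.exp (M₂ + a₂ * z) := by
          rw [hc2]
          exact exp_le_exp.2 (by nlinarith)
        have := concave_step_right hconc (exp_pos _) hkgrad h2 h1
        linarith
    have h1 : ∫ z, (f (Real.exp (M₁ + a₁ * z)) - k * Real.exp (M₁ + a₁ * z)) ∂(gaussianReal 0 1)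
        ≤ ∫ z, (f (Real.exp (M₂ + a₂ * z)) - k * Real.exp (M₂ + a₂ * z)) ∂(gaussianReal 0 1) :=
      integral_mono (iF₁.sub ((iG M₁ a₁).const_mul k)) (iF₂.sub ((iG M₂ a₂).const_mul k)) key
    rw [integral_sub iF₁ ((iG M₁ a₁).const_mul k),
      integral_sub iF₂ ((iG M₂ a₂).const_mul k),
      integral_const_mul, integral_const_mul, EG M₁ a₁, EG M₂ a₂] at h1
    have hEE : Real.exp (M₁ + a₁ ^ 2 / 2) ≤ Real.exp (M₂ + a₂ ^ 2 / 2) := exp_le_exp.2 hE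
    nlinarith [mul_nonneg hk0 (sub_nonneg.2 hEE)]

/-- for `T > 0`, `S₀ > 0`, `μ₁ ≤ μ`, `0 < σ ≤ s`, the log-normal distribution
with parameters `log S₀ + (μ₁ − s²/2)T` and `s²T` is dominated in second order stochastic
dominance by the log-normal distribution with parameters `log S₀ + (μ − σ²/2)T` and
`σ²T`. -/
theorem stmt8 (T S₀ μ₁ μ σ s : ℝ)
    (hT : 0 < T) (hS₀ : 0 < S₀) (hμ : μ₁ ≤ μ) (hσ : 0 < σ) (hσs : σ ≤ s) :
    IntOrder FSSD
      (lognormal (Real.log S₀ + (μ₁ - s ^ 2 / 2) * T) (s ^ 2 * T))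
      (lognormal (Real.log S₀ + (μ - σ ^ 2 / 2) * T) (σ ^ 2 * T)) := by
  have hs : 0 < s := hσ.trans_le hσs
  have hsT : s ^ 2 * T = (s * Real.sqrt T) ^ 2 := by
    rw [mul_pow, sq_sqrt hT.le]
  have hσT : σ ^ 2 * T = (σ * Real.sqrt T) ^ 2 := by
    rw [mul_pow, sq_sqrt hT.le]
  rw [hsT, hσT]
  refine main_aux _ _ _ _ (by positivity) ?_ ?_
  · exact mul_le_mul_of_nonneg_right hσs (sqrt_nonneg T)
  · have h1 : (s * Real.sqrt T) ^ 2 = s ^ 2 * T := hsT.symm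
    have h2 : (σ * Real.sqrt T) ^ 2 = σ ^ 2 * T := hσT.symm
    rw [h1, h2]
    have := mul_le_mul_of_nonneg_right hμ hT.le
    ring_nf
    nlinarith

end
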